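/- There exists an infinite canonically immune set; specifically, if (x_i) is a strictly increasing sequence such that x_i lies outside the union of all canonical finite sets D_r(e) with r,e < i appropriately diagonalized, then R = {x_i : i ∈ ℕ} is canonically immune with witness h(e) = e + 1. -/

import Mathlib

/-- The list of the first `n` values of `g`. -/
def funToList (g : ℕ → ℕ) (n : ℕ) : List ℕ := (List.range n).map g

open Classical in
/-- Characteristic (partial) function of a set of naturals, used as an oracle. -/
noncomputable def chi (A : Set ℕ) : ℕ →. ℕ := fun n => Part.some (if n ∈ A then 1 else 0)

/-- A total function regarded as a partial oracle. -/
def totalize (g : ℕ → ℕ) : ℕ →. ℕ := fun n => Part.some (g n)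

/-- Codes for oracle Turing machines (partial recursive functionals). -/
inductive OCode : Type
  | zero | succ | left | right | oracle
  | pair (a b : OCode) | comp (a b : OCode) | prec (a b : OCode) | rfind' (a : OCode)

/-- Evaluation of an oracle code with oracle `g`. -/
def OCode.eval (g : ℕ →. ℕ) : OCode → ℕ →. ℕ
  | .zero => pure 0
  | .succ => fun n => Part.some (n + 1)
  | .left => fun n => Part.some (Nat.unpair n).1
  | .right => fun n => Part.some (Nat.unpair n).2
  | .oracle => g
  | .pair a b => fun n => Nat.pair <$> OCode.eval g a n <*> OCode.eval g b n
  | .comp a b => fun n => OCode.eval g b n >>= OCode.eval g a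
  | .prec a b =>
      Nat.unpaired fun m n =>
        n.rec (OCode.eval g a m) fun y IH => do
          let i ← IH
          OCode.eval g b (Nat.pair m (Nat.pair y i))
  | .rfind' a =>
      Nat.unpaired fun m n =>
        (Nat.rfind fun k => (fun x => x = 0) <$> OCode.eval g a (Nat.pair m (k + n))).map (· + n)

/-- A surjective numbering of oracle codes. -/
def OCode.ofNat : ℕ → OCode
  | 0 => .zero
  | 1 => .succ
  | 2 => .left
  | 3 => .right
  | 4 => .oracle
  | n + 5 =>
    let m := n.div2.div2
    have hm : m < n + 5 := by
      simp only [m, Nat.div2_val]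
      exact lt_of_le_of_lt (le_trans (Nat.div_le_self _ _) (Nat.div_le_self _ _)) (by omega)
    have _m1 : m.unpair.1 < n + 5 := lt_of_le_of_lt m.unpair_left_le hm
    have _m2 : m.unpair.2 < n + 5 := lt_of_le_of_lt m.unpair_right_le hm
    match n.bodd, n.div2.bodd with
    | false, false => .pair (OCode.ofNat m.unpair.1) (OCode.ofNat m.unpair.2)
    | false, true  => .comp (OCode.ofNat m.unpair.1) (OCode.ofNat m.unpair.2)
    | true , false => .prec (OCode.ofNat m.unpair.1) (OCode.ofNat m.unpair.2)
    | true , true  => .rfind' (OCode.ofNat m)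
decreasing_by
  all_goals
    try simp_wf
    have h1 := Nat.unpair_left_le n.div2.div2
    have h2 := Nat.unpair_right_le n.div2.div2
    have h3 : n.div2.div2 ≤ n := by
      simp only [Nat.div2_val]; exact le_trans (Nat.div_le_self _ _) (Nat.div_le_self _ _)
    omega

/-- `{e}^g`, the `e`-th oracle machine with oracle `g`. -/
def OEval (e : ℕ) (g : ℕ →. ℕ) : ℕ →. ℕ := (OCode.ofNat e).eval g

/-- `{e}`, the `e`-th (ordinary) partial recursive function. -/
def phi (e : ℕ) : ℕ →. ℕ := (Denumerable.ofNat Nat.Partrec.Code e).eval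

/-- `W_e`, the `e`-th computably enumerable set. -/
def We (e : ℕ) : Set ℕ := {n | (phi e n).Dom}

/-- `A` is computably enumerable. -/
def CE (A : Set ℕ) : Prop := ∃ e : ℕ, A = We e

/-- `A` is Δ⁰₂ (limit computable). -/
def Delta02 (A : Set ℕ) : Prop :=
  ∃ F : ℕ → ℕ → Bool, Computable₂ F ∧ ∀ x, ∃ N, ∀ s ≥ N, (F s x = true ↔ x ∈ A)

/-- Π⁰₂ subsets of ℕ. -/
def Pi2 (S : Set ℕ) : Prop :=
  ∃ R : ℕ × ℕ × ℕ → Bool, Computable R ∧ S = {e | ∀ a, ∃ b, R (e, a, b) = true}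

/-- Π⁰₃ subsets of ℕ. -/
def Pi3 (S : Set ℕ) : Prop :=
  ∃ R : ℕ × ℕ × ℕ × ℕ → Bool, Computable R ∧ S = {e | ∀ a, ∃ b, ∀ c, R (e, a, b, c) = true}

/-- Π⁰₄ subsets of ℕ. -/
def Pi4 (S : Set ℕ) : Prop :=
  ∃ R : ℕ × ℕ × ℕ × ℕ × ℕ → Bool, Computable R ∧
    S = {e | ∀ a, ∃ b, ∀ c, ∃ d, R (e, a, b, c, d) = true}

/-- Π¹₁ subsets of ℕ (Kleene normal form). -/
def Pi11 (S : Set ℕ) : Prop :=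
  ∃ R : ℕ × List ℕ → Bool, Computable R ∧
    S = {e | ∀ f : ℕ → ℕ, ∃ n, R (e, funToList f n) = true}

/-- Many-one reducibility. -/
def ManyOneRed (T S : Set ℕ) : Prop := ∃ h : ℕ → ℕ, Computable h ∧ ∀ e, e ∈ T ↔ h e ∈ S

def Pi2Complete (S : Set ℕ) : Prop := Pi2 S ∧ ∀ T, Pi2 T → ManyOneRed T S
def Pi3Complete (S : Set ℕ) : Prop := Pi3 S ∧ ∀ T, Pi3 T → ManyOneRed T S
def Pi4Complete (S : Set ℕ) : Prop := Pi4 S ∧ ∀ T, Pi4 T → ManyOneRed T S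
def Pi11Complete (S : Set ℕ) : Prop := Pi11 S ∧ ∀ T, Pi11 T → ManyOneRed T S

/-- `g` is an `n`-bounded diagonally non-computable function. -/
def DNCb (n : ℕ) (g : ℕ → ℕ) : Prop := (∀ x, g x < n) ∧ ∀ x y, y ∈ phi x x → g x ≠ y

/-- `g` is diagonally non-computable. -/
def DNCfun (g : ℕ → ℕ) : Prop := ∀ x y, y ∈ phi x x → g x ≠ y

/-- `A` is immune: infinite with no infinite c.e. subset. -/
def Immune (A : Set ℕ) : Prop := A.Infinite ∧ ∀ B, CE B → B.Infinite → ¬B ⊆ A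

/-- `A` is bi-immune. -/
def BiImmune (A : Set ℕ) : Prop := Immune A ∧ Immune Aᶜ

/-- `f` is strongly non-recursive. -/
def SNR (f : ℕ → ℕ) : Prop :=
  ∀ h : ℕ → ℕ, Computable h → ∀ᶠ n in Filter.atTop, f n ≠ h n

/-- A canonical numbering of all finite sets (presented as lists). -/
def CanonicalNumbering (H : ℕ → List ℕ) : Prop :=
  Computable H ∧ ∀ S : Finset ℕ, ∃ e, (H e).toFinset = S

/-- `R` is canonically immune. -/
def CanonImmune (R : Set ℕ) : Prop :=
  R.Infinite ∧ ∃ h : ℕ → ℕ, Computable h ∧ ∀ H, CanonicalNumbering H →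
    ∀ᶠ e in Filter.atTop, (∀ x ∈ H e, x ∈ R) → (H e).toFinset.card ≤ h e

/-- A Medvedev reduction of `F` (class of total functions) to `G` (class of partial oracles):
a single code `e` such that `{e}^g` is total and in `F` for every `g ∈ G`. -/
def MedvedevRed (F : Set (ℕ → ℕ)) (G : Set (ℕ →. ℕ)) : Prop :=
  ∃ e : ℕ, ∀ g ∈ G, ∃ f ∈ F, ∀ x, OEval e g x = Part.some (f x)

/-- The set `G[F]` of `G`-universal `F`-codes, for classes of partial oracles `G`
and total functions `F`. -/
def UnivCodes (G : Set (ℕ →. ℕ)) (F : Set (ℕ → ℕ)) : Set ℕ :=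
  {e | ∀ g ∈ G, ∃ f ∈ F, ∀ x, OEval e g x = Part.some (f x)}

/-- The set `G[F]` with total oracles. -/
def UnivCodesT (G : Set (ℕ → ℕ)) (F : Set (ℕ → ℕ)) : Set ℕ :=
  {e | ∀ g ∈ G, ∃ f ∈ F, ∀ x, OEval e (totalize g) x = Part.some (f x)}

open Classical in
noncomputable def UnivCodesSet (A : Set (ℕ → ℕ)) (B : Set (Set ℕ)) : Set ℕ :=
  {e | ∀ Y ∈ A, ∃ S ∈ B, ∀ x, OEval e (totalize Y) x = Part.some (if x ∈ S then 1 else 0)}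

/-- Π¹₁ classes of functions. -/
def Pi11Fun (C : Set (ℕ → ℕ)) : Prop :=
  ∃ R : List ℕ × List ℕ → Bool, Computable R ∧
    C = {f | ∀ g : ℕ → ℕ, ∃ n, R (funToList f n, funToList g n) = true}

/-- Σ¹₁ classes of functions. -/
def Sigma11Fun (C : Set (ℕ → ℕ)) : Prop :=
  ∃ R : List ℕ × List ℕ → Bool, Computable R ∧
    C = {f | ∃ g : ℕ → ℕ, ∀ n, R (funToList f n, funToList g n) = true}

/-- Hyperarithmetic (Δ¹₁) classes of functions. -/
def Hyp (C : Set (ℕ → ℕ)) : Prop := Pi11Fun C ∧ Sigma11Fun C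

/-- Hyperarithmetic classes of sets, via characteristic functions. -/
def HypSet (C : Set (Set ℕ)) : Prop :=
  Hyp {f | (∀ n, f n ≤ 1) ∧ {n | f n = 1} ∈ C}

/-- `B` is a tail set: closed under finite modifications. -/
def TailSet (B : Set (Set ℕ)) : Prop :=
  ∀ S T : Set ℕ, (S \ T ∪ T \ S).Finite → S ∈ B → T ∈ B

/-- Proper extension of finite strings. -/
def StrictPrefix (α β : List ℕ) : Prop := α <+: β ∧ α ≠ β

/-- A `Δ⁰₂` embedding of Baire space, given by a uniformly computable sequence of
`≺`-isomorphisms on finite strings converging pointwise to `fstar`, inducing `toFun`. -/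
structure Delta02Embedding where
  fs : ℕ → List ℕ → List ℕ
  fstar : List ℕ → List ℕ
  toFun : (ℕ → ℕ) → (ℕ → ℕ)
  computable : Computable₂ fs
  iso : ∀ s α β, StrictPrefix α β ↔ StrictPrefix (fs s α) (fs s β)
  limit : ∀ α, ∃ N, ∀ s ≥ N, fs s α = fstar α
  union : ∀ X n, fstar (funToList X n) = funToList (toFun X) (fstar (funToList X n)).length
  unbounded : ∀ X k, ∃ n, k ≤ (fstar (funToList X n)).length

/-- Π⁰₂ classes of functions. -/
def Pi02Class (P : Set (ℕ → ℕ)) : Prop :=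
  ∃ h : ℕ → ℕ → List ℕ, Computable₂ h ∧
    P = {X | ∀ n, ∃ s, h n s = funToList X (h n s).length}

/-- `{e}` is total. -/
def TotCode (e : ℕ) : Prop := ∀ i, (phi e i).Dom

/-- The computable tree coded by `e`: the downward closure of `{ρ_i : {e}(i) = 1}`. -/
def TreeOf (e : ℕ) : Set (List ℕ) :=
  {σ | ∃ τ : List ℕ, σ <+: τ ∧ ∃ i : ℕ, Denumerable.ofNat (List ℕ) i = τ ∧ 1 ∈ phi e i}

/-- Codes of total functions whose coded tree has no infinite branch. -/
def NoPath : Set ℕ :=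
  {e | TotCode e ∧ ¬∃ X : ℕ → ℕ, ∀ n, funToList X n ∈ TreeOf e}

private lemma le_foldr_max_of_mem {y : ℕ} {l : List ℕ} (h : y ∈ l) : y ≤ l.foldr max 0 := by
  induction l with
  | nil => simp at h
  | cons a t ih =>
    rcases List.mem_cons.1 h with rfl | h
    · exact le_max_left _ _
    · exact le_trans (ih h) (le_max_right _ _)

/-- there is an infinite canonically immune set, with witness h(e) = e + 1. -/
theorem exists_canonically_immune :
    ∃ R : Set ℕ, R.Infinite ∧ ∀ H : ℕ → List ℕ, CanonicalNumbering H →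
      ∀ᶠ e in Filter.atTop, (∀ x ∈ H e, x ∈ R) → (H e).toFinset.card ≤ e + 1 := by
  classical
  have key : ∀ H : ℕ → List ℕ, Computable H → ∃ c : Nat.Partrec.Code,
      ∀ n, c.eval n = Part.some (Encodable.encode (H n)) := by
    intro H hH
    have h1 : Computable fun n => Encodable.encode (H n) := Computable.encode.comp hH
    have h2 : Nat.Partrec fun n => Part.some (Encodable.encode (H n)) := Partrec.nat_iff.1 h1
    obtain ⟨c, hc⟩ := Nat.Partrec.Code.exists_code.1 h2
    exact ⟨c, fun n => by rw [hc]⟩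
  have hS : {H : ℕ → List ℕ | Computable H}.Countable := by
    rw [Set.countable_coe_iff.symm]
    have hch : ∀ H : {H : ℕ → List ℕ // Computable H}, ∃ c : Nat.Partrec.Code,
        ∀ n, c.eval n = Part.some (Encodable.encode (H.1 n)) := fun H => key H.1 H.2
    choose c hc using hch
    have hinj : Function.Injective c := by
      intro H1 H2 h
      apply Subtype.ext
      funext n
      have h1 := hc H1 n
      have h2 := hc H2 n
      rw [h] at h1
      rw [h1] at h2
      exact Encodable.encode_injective (Part.some_injective h2)
    exact hinj.countable
  have hne : {H : ℕ → List ℕ | Computable H}.Nonempty :=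
    ⟨fun _ => [], Computable.const []⟩
  obtain ⟨f, hf⟩ := hS.exists_eq_range hne
  -- bound function
  set B : ℕ → ℕ := fun i =>
    (Finset.range (i+1)).sup fun k => (Finset.range (i+1)).sup fun e => (f k e).foldr max 0 with hB
  have hBmem : ∀ {k e i : ℕ}, k ≤ i → e ≤ i → ∀ y ∈ f k e, y ≤ B i := by
    intro k e i hk he y hy
    calc y ≤ (f k e).foldr max 0 := le_foldr_max_of_mem hy
    _ ≤ (Finset.range (i+1)).sup fun e => (f k e).foldr max 0 :=
        Finset.le_sup (f := fun e => (f k e).foldr max 0) (Finset.mem_range.2 (Nat.lt_succ_of_le he))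
    _ ≤ B i := Finset.le_sup (f := fun k => (Finset.range (i+1)).sup fun e => (f k e).foldr max 0)
        (Finset.mem_range.2 (Nat.lt_succ_of_le hk))
  -- the sequence
  set x : ℕ → ℕ := fun n => Nat.rec (B 0 + 1) (fun i xi => max xi (B (i+1)) + 1) n with hx
  have hmono : StrictMono x := by
    apply strictMono_nat_of_lt_succ
    intro n
    exact Nat.lt_succ_of_le (le_max_left _ _)
  have hxB : ∀ i, B i < x i := by
    intro i
    cases i with
    | zero => exact Nat.lt_succ_self _
    | succ i => exact Nat.lt_succ_of_le (le_max_right _ _)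
  refine ⟨Set.range x, Set.infinite_range_of_injective hmono.injective, ?_⟩
  intro H hH
  have hmem : H ∈ Set.range f := by rw [← hf]; exact hH.1
  obtain ⟨k, hk⟩ := hmem
  rw [Filter.eventually_atTop]
  refine ⟨k, fun e he hsub => ?_⟩
  have hsubset : (H e).toFinset ⊆ Finset.image x (Finset.range (e+1)) := by
    intro y hy
    have hyH : y ∈ H e := List.mem_toFinset.1 hy
    obtain ⟨j, rfl⟩ := hsub y hyH
    refine Finset.mem_image.2 ⟨j, Finset.mem_range.2 ?_, rfl⟩
    by_contra hj
    push_neg at hj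
    have hkj : k ≤ j := le_trans he (Nat.le_of_succ_le hj)
    have hej : e ≤ j := Nat.le_of_succ_le hj
    have : x j ≤ B j := hBmem hkj hej (x j) (by rw [hk]; exact hyH)
    exact absurd this (not_le.2 (hxB j))
  calc (H e).toFinset.card ≤ (Finset.image x (Finset.range (e+1))).card :=
      Finset.card_le_card hsubset
  _ ≤ (Finset.range (e+1)).card := Finset.card_image_le
  _ = e + 1 := Finset.card_range _
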